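/- Let K, M be positive integers, c ∈ ℝ^K, R > 0, σ₁ > 0 and α > 1. Let (p₁, …, p_M) and (p′₁, …, p′_M) be two families of points of ℝ^K that agree at all but one index, and let p̃ᵢ = c + (pᵢ − c)/max(1, ‖pᵢ − c‖₂/R) and p̃′ᵢ = c + (p′ᵢ − c)/max(1, ‖p′ᵢ − c‖₂/R) be their projections onto the closed ball of radius R around c. Let P be the law of (1/M)(∑ᵢ p̃ᵢ + Z) and P′ the law of (1/M)(∑ᵢ p̃′ᵢ + Z), where Z has independent N(0, 4R²σ₁²) coordinates. Then the Rényi divergence of order α satisfies D_α(P‖P′) ≤ α/(2σ₁²); in particular, choosing σ₁ = √(α/(2τ₁)) makes the projected mean estimation step of AdaDPSyn (α, τ₁)-Rényi differentially private. -/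

import Mathlib

open MeasureTheory ProbabilityTheory

/- Rényi divergence of order `α`. -/
open Classical in
noncomputable def renyiDiv {X : Type*} [MeasurableSpace X] (α : ℝ) (P Q : Measure X) : EReal :=
  if P ≪ Q then
    (((α - 1)⁻¹ * Real.log (∫ x, (P.rnDeriv Q x).toReal ^ α ∂Q) : ℝ) : EReal)
  else ⊤

/-- The Euclidean (ℓ₂) norm on `ℝ^K`. -/
noncomputable def l2norm {K : ℕ} (x : Fin K → ℝ) : ℝ :=
  Real.sqrt (∑ k, (x k) ^ 2)

/-- Projection of `q` onto the closed ℓ₂-ball of radius `R` centered at `c`: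
`c + (q − c)/max(1, ‖q − c‖₂/R)`. -/
noncomputable def projBall {K : ℕ} (c : Fin K → ℝ) (R : ℝ) (q : Fin K → ℝ) : Fin K → ℝ :=
  c + (max 1 (l2norm (q - c) / R))⁻¹ • (q - c)


open Real
open scoped NNReal ENNReal

noncomputable def rr (m m' : ℝ) (v : ℝ≥0) (t : ℝ) : ℝ := ((t - m')^2 - (t - m)^2) / (2*v)

lemma measurable_rr (m m' : ℝ) (v : ℝ≥0) : Measurable (rr m m' v) := by
  unfold rr; fun_prop

lemma pdf_mul_exp (m m' : ℝ) {v : ℝ≥0} (hv : v ≠ 0) (β t : ℝ) :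
    gaussianPDFReal m' v t * rexp (β * rr m m' v t)
      = rexp (β*(β-1)*(m-m')^2/(2*v)) * gaussianPDFReal (m' + β*(m-m')) v t := by
  have hv' : (0:ℝ) < v := by positivity
  unfold rr gaussianPDFReal
  have key : -(t-m')^2/(2*(v:ℝ)) + β * (((t - m')^2 - (t - m)^2) / (2*(v:ℝ)))
      = β*(β-1)*(m-m')^2/(2*(v:ℝ)) + -(t-(m'+β*(m-m')))^2/(2*(v:ℝ)) := by
    field_simp
    ring
  rw [mul_assoc, ← Real.exp_add, key, Real.exp_add]
  ring

lemma lintegral_exp_rr (m m' : ℝ) {v : ℝ≥0} (hv : v ≠ 0) (β : ℝ) :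
    ∫⁻ t, ENNReal.ofReal (rexp (β * rr m m' v t)) ∂(gaussianReal m' v)
      = ENNReal.ofReal (rexp (β*(β-1)*(m-m')^2/(2*v))) := by
  rw [gaussianReal_of_var_ne_zero _ hv,
    lintegral_withDensity_eq_lintegral_mul _ (measurable_gaussianPDF _ _)
      (((measurable_rr m m' v).const_mul β).exp.ennreal_ofReal)]
  have : ∀ t, (gaussianPDF m' v * fun t => ENNReal.ofReal (rexp (β * rr m m' v t))) t
      = ENNReal.ofReal (rexp (β*(β-1)*(m-m')^2/(2*v))) * ENNReal.ofReal (gaussianPDFReal (m' + β*(m-m')) v t) := by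
    intro t
    simp only [Pi.mul_apply, gaussianPDF]
    rw [← ENNReal.ofReal_mul (gaussianPDFReal_nonneg _ _ _), pdf_mul_exp m m' hv β t,
      ENNReal.ofReal_mul (Real.exp_pos _).le]
  simp_rw [this]
  rw [lintegral_const_mul _ ((measurable_gaussianPDFReal _ _).ennreal_ofReal),
    lintegral_gaussianPDFReal_eq_one _ hv, mul_one]

lemma gauss_eq_withDensity (m m' : ℝ) {v : ℝ≥0} (hv : v ≠ 0) :
    gaussianReal m v = (gaussianReal m' v).withDensity (fun t => ENNReal.ofReal (rexp (rr m m' v t))) := by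
  rw [gaussianReal_of_var_ne_zero m hv, gaussianReal_of_var_ne_zero m' hv,
    ← withDensity_mul _ (measurable_gaussianPDF _ _) ((measurable_rr m m' v).exp.ennreal_ofReal)]
  congr 1
  funext t
  simp only [Pi.mul_apply, gaussianPDF]
  rw [← ENNReal.ofReal_mul (gaussianPDFReal_nonneg _ _ _)]
  have := pdf_mul_exp m m' hv 1 t
  simp only [one_mul, sub_self, mul_zero, zero_mul, mul_one, zero_div, Real.exp_zero] at this
  rw [this]
  ring_nf

lemma lintegral_pi_prod : ∀ {n : ℕ} (η : Fin n → Measure ℝ), (∀ i, SigmaFinite (η i)) →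
    ∀ {f : Fin n → ℝ → ℝ≥0∞}, (∀ i, Measurable (f i)) →
    ∫⁻ x, ∏ i, f i (x i) ∂Measure.pi η = ∏ i, ∫⁻ t, f i t ∂η i := by
  intro n
  induction n with
  | zero =>
    intro η _ f hf
    simp [lintegral_const, Measure.pi_univ]
  | succ n ih =>
    intro η hη f hf
    have := hη
    rw [← ((measurePreserving_piFinSuccAbove η 0).symm).lintegral_comp_emb
      (MeasurableEquiv.measurableEmbedding _)]
    simp_rw [MeasurableEquiv.piFinSuccAbove_symm_apply, Fin.insertNthEquiv,
      Fin.prod_univ_succ, Fin.insertNth_zero, Equiv.coe_fn_mk, Fin.cons_succ, Fin.cons_zero,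
      Fin.zero_succAbove, cast_eq]
    have h2 : AEMeasurable (fun b : Fin n → ℝ => ∏ x : Fin n, f x.succ (b x))
        (Measure.pi fun j => η j.succ) :=
      (Finset.measurable_prod Finset.univ fun i _ =>
        (hf i.succ).comp (measurable_pi_apply i)).aemeasurable
    rw [show (∫⁻ (a : ℝ × (Fin n → ℝ)), f 0 a.1 * ∏ x : Fin n, f x.succ (a.2 x)
          ∂(η 0).prod (Measure.pi fun j => η j.succ))
        = (∫⁻ t, f 0 t ∂η 0) * ∫⁻ b, ∏ x : Fin n, f x.succ (b x)
          ∂(Measure.pi fun j => η j.succ) from lintegral_prod_mul (hf 0).aemeasurable h2,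
      ih _ (fun j => hη j.succ) (fun j => hf j.succ)]

lemma pi_gauss_eq_withDensity {n : ℕ} (m m' : Fin n → ℝ) {v : ℝ≥0} (hv : v ≠ 0) :
    (Measure.pi fun k => gaussianReal (m k) v)
      = (Measure.pi fun k => gaussianReal (m' k) v).withDensity
        (fun x => ∏ k, ENNReal.ofReal (rexp (rr (m k) (m' k) v (x k)))) := by
  refine Measure.pi_eq fun s hs => ?_
  rw [withDensity_apply _ (MeasurableSet.univ_pi hs), ← lintegral_indicator (MeasurableSet.univ_pi hs)]
  have hind : ∀ x : Fin n → ℝ,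
      (Set.univ.pi s).indicator (fun x => ∏ k, ENNReal.ofReal (rexp (rr (m k) (m' k) v (x k)))) x
      = ∏ k, (s k).indicator (fun t => ENNReal.ofReal (rexp (rr (m k) (m' k) v t))) (x k) := by
    intro x
    by_cases hx : x ∈ Set.univ.pi s
    · rw [Set.indicator_of_mem hx]
      refine Finset.prod_congr rfl fun k _ => ?_
      rw [Set.indicator_of_mem (hx k (Set.mem_univ k))]
    · rw [Set.indicator_of_notMem hx]
      have : ∃ k, x k ∉ s k := by
        by_contra h
        push_neg at h
        exact hx (Set.mem_univ_pi.mpr h)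
      obtain ⟨k, hk⟩ := this
      exact (Finset.prod_eq_zero (Finset.mem_univ k) (by rw [Set.indicator_of_notMem hk])).symm
  simp_rw [hind]
  rw [lintegral_pi_prod _ (fun k => inferInstance)
    (fun k => ((measurable_rr _ _ v).exp.ennreal_ofReal).indicator (hs k))]
  refine Finset.prod_congr rfl fun k _ => ?_
  rw [lintegral_indicator (hs k), ← withDensity_apply _ (hs k), ← gauss_eq_withDensity _ _ hv]

lemma renyiDiv_pi_gauss {n : ℕ} (m m' : Fin n → ℝ) {v : ℝ≥0} (hv : v ≠ 0) {α : ℝ} (hα : 1 < α) :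
    renyiDiv α (Measure.pi fun k => gaussianReal (m k) v)
      (Measure.pi fun k => gaussianReal (m' k) v)
      = ((α * (∑ k, (m k - m' k)^2) / (2*(v:ℝ)) : ℝ) : EReal) := by
  set Q := Measure.pi fun k => gaussianReal (m' k) v with hQ
  set F : (Fin n → ℝ) → ℝ≥0∞ :=
    fun x => ∏ k, ENNReal.ofReal (rexp (rr (m k) (m' k) v (x k))) with hF
  have hFm : Measurable F := Finset.measurable_prod _ fun k _ =>
    ((measurable_rr _ _ v).exp.ennreal_ofReal).comp (measurable_pi_apply k)
  have hPQ := pi_gauss_eq_withDensity m m' hv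
  have hac : (Measure.pi fun k => gaussianReal (m k) v) ≪ Q := by
    rw [hPQ]; exact withDensity_absolutelyContinuous _ _
  simp only [renyiDiv]
  rw [if_pos hac]
  have hint : ∫ x, ((Measure.pi fun k => gaussianReal (m k) v).rnDeriv Q x).toReal ^ α ∂Q
      = ∫ x, ∏ k, rexp (α * rr (m k) (m' k) v (x k)) ∂Q := by
    refine integral_congr_ae ?_
    have h1 : (Measure.pi fun k => gaussianReal (m k) v).rnDeriv Q =ᵐ[Q] F := by
      rw [hPQ]; exact Measure.rnDeriv_withDensity Q hFm
    filter_upwards [h1] with x hx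
    rw [hx, hF]
    simp only
    rw [ENNReal.toReal_prod,
      Finset.prod_congr rfl (fun k (_ : k ∈ Finset.univ) =>
        ENNReal.toReal_ofReal (Real.exp_pos (rr (m k) (m' k) v (x k))).le),
      ← Real.exp_sum, Real.rpow_def_of_pos (Real.exp_pos _), Real.log_exp, ← Real.exp_sum]
    congr 1
    rw [mul_comm, Finset.mul_sum]
  rw [hint]
  have hnn : 0 ≤ᵐ[Q] fun x => ∏ k, rexp (α * rr (m k) (m' k) v (x k)) :=
    Filter.Eventually.of_forall fun x => Finset.prod_nonneg fun k _ => (Real.exp_pos _).le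
  have hm : AEStronglyMeasurable (fun x => ∏ k, rexp (α * rr (m k) (m' k) v (x k))) Q :=
    (Finset.measurable_prod _ fun k _ =>
      (((measurable_rr _ _ v).const_mul α).exp).comp (measurable_pi_apply k)).aestronglyMeasurable
  rw [integral_eq_lintegral_of_nonneg_ae hnn hm]
  have hl : ∫⁻ x, ENNReal.ofReal (∏ k, rexp (α * rr (m k) (m' k) v (x k))) ∂Q
      = ENNReal.ofReal (rexp (α*(α-1) * (∑ k, (m k - m' k)^2) / (2*(v:ℝ)))) := by
    have hsplit : ∀ x : Fin n → ℝ, ENNReal.ofReal (∏ k, rexp (α * rr (m k) (m' k) v (x k)))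
        = ∏ k, ENNReal.ofReal (rexp (α * rr (m k) (m' k) v (x k))) := fun x =>
      ENNReal.ofReal_prod_of_nonneg (fun k _ => (Real.exp_pos _).le)
    simp_rw [hsplit]
    rw [hQ, lintegral_pi_prod _ (fun k => inferInstance)
      (fun k => ((measurable_rr _ _ v).const_mul α).exp.ennreal_ofReal),
      Finset.prod_congr rfl (fun k (_ : k ∈ Finset.univ) => lintegral_exp_rr (m k) (m' k) hv α),
      ← ENNReal.ofReal_prod_of_nonneg (fun k _ => (Real.exp_pos _).le), ← Real.exp_sum]
    congr 2
    rw [← Finset.sum_div, ← Finset.mul_sum]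
  rw [hl, ENNReal.toReal_ofReal (Real.exp_pos _).le, Real.log_exp]
  have hα1 : α - 1 ≠ 0 := by linarith
  congr 1
  field_simp

noncomputable def invSqNN (M : ℕ) : ℝ≥0 := ⟨((M:ℝ)⁻¹)^2, sq_nonneg _⟩

lemma coe_invSqNN (M : ℕ) : ((invSqNN M : ℝ≥0) : ℝ) = ((M:ℝ)⁻¹)^2 := rfl

lemma map_affine_pi (K M : ℕ) (v : ℝ≥0) (s : Fin K → ℝ) :
    ((Measure.pi fun _ : Fin K => gaussianReal 0 v).map (fun z => (M : ℝ)⁻¹ • (s + z)))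
      = Measure.pi fun k => gaussianReal ((M:ℝ)⁻¹ * s k)
          (invSqNN M * v) := by
  have hcoord : ∀ k : Fin K, MeasurePreserving (fun t : ℝ => (M:ℝ)⁻¹ * (s k + t))
      (gaussianReal 0 v)
      (gaussianReal ((M:ℝ)⁻¹ * s k) (invSqNN M * v)) := by
    intro k
    refine ⟨(measurable_const_add (s k)).const_mul _, ?_⟩
    have h1 : (fun t : ℝ => (M:ℝ)⁻¹ * (s k + t))
        = (fun u : ℝ => (M:ℝ)⁻¹ * u) ∘ (fun t : ℝ => s k + t) := rfl
    rw [h1, ← Measure.map_map (measurable_const_mul _) (measurable_const_add _),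
      gaussianReal_map_const_add, gaussianReal_map_const_mul]
    simp only [zero_add]
    rfl
  have hmp := measurePreserving_pi (fun _ : Fin K => gaussianReal 0 v)
    (fun k => gaussianReal ((M:ℝ)⁻¹ * s k) (invSqNN M * v)) hcoord
  have hfun : (fun z : Fin K → ℝ => (M : ℝ)⁻¹ • (s + z))
      = fun (a : Fin K → ℝ) (k : Fin K) => (M:ℝ)⁻¹ * (s k + a k) := by
    funext z; funext k; simp [Pi.smul_apply]
  rw [hfun]
  exact hmp.map_eq


lemma projBall_sub_sq_sum_le {K : ℕ} (c : Fin K → ℝ) {R : ℝ} (hR : 0 < R) (q : Fin K → ℝ) :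
    ∑ k, (projBall c R q k - c k)^2 ≤ R^2 := by
  have happ : ∀ k, projBall c R q k - c k = (max 1 (l2norm (q - c) / R))⁻¹ * (q - c) k := by
    intro k; simp [projBall]
  set ℓ := l2norm (q - c) with hℓ
  have hℓ0 : 0 ≤ ℓ := Real.sqrt_nonneg _
  have hℓsq : ℓ^2 = ∑ k, ((q - c) k)^2 :=
    Real.sq_sqrt (Finset.sum_nonneg fun k _ => sq_nonneg _)
  have hcalc : ∑ k, (projBall c R q k - c k)^2 = ((max 1 (ℓ / R))⁻¹)^2 * ℓ^2 := by
    rw [hℓsq]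
    simp_rw [happ, mul_pow]
    rw [← Finset.mul_sum]
  rw [hcalc]
  rcases le_total (ℓ / R) 1 with h | h
  · rw [max_eq_left h]
    have hl : ℓ ≤ R := (div_le_one hR).mp h
    simp only [inv_one, one_pow, one_mul]
    nlinarith
  · rw [max_eq_right h]
    have hp : 0 < ℓ := lt_of_lt_of_le hR ((one_le_div hR).mp h)
    have : ((ℓ / R)⁻¹)^2 * ℓ^2 = R^2 := by
      field_simp
    linarith

/-- RDP of the projected mean estimation step of AdaDPSyn: the law of
`(1/M)(∑ᵢ p̃ᵢ + Z)` with `Z` having i.i.d. `N(0, 4R²σ₁²)` coordinates, on two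
neighboring families, has Rényi divergence of order `α` at most `α/(2σ₁²)`;
in particular, choosing `σ₁ = √(α/(2τ₁))` makes the step `(α, τ₁)`-RDP. -/
theorem projected_mean_estimation_rdp (K M : ℕ) (hK : 0 < K) (hM : 0 < M)
    (c : Fin K → ℝ) (R σ₁ α : ℝ) (hR : 0 < R) (hσ₁ : 0 < σ₁) (hα : 1 < α)
    (p p' : Fin M → (Fin K → ℝ)) (j : Fin M) (hagree : ∀ i, i ≠ j → p i = p' i) :
    renyiDiv α
      ((Measure.pi fun _ : Fin K => gaussianReal 0 (4 * R ^ 2 * σ₁ ^ 2).toNNReal).map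
        (fun z => (M : ℝ)⁻¹ • ((∑ i, projBall c R (p i)) + z)))
      ((Measure.pi fun _ : Fin K => gaussianReal 0 (4 * R ^ 2 * σ₁ ^ 2).toNNReal).map
        (fun z => (M : ℝ)⁻¹ • ((∑ i, projBall c R (p' i)) + z)))
      ≤ ((α / (2 * σ₁ ^ 2) : ℝ) : EReal) ∧
    ∀ τ₁ : ℝ, 0 < τ₁ → σ₁ = Real.sqrt (α / (2 * τ₁)) →
      renyiDiv α
        ((Measure.pi fun _ : Fin K => gaussianReal 0 (4 * R ^ 2 * σ₁ ^ 2).toNNReal).map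
          (fun z => (M : ℝ)⁻¹ • ((∑ i, projBall c R (p i)) + z)))
        ((Measure.pi fun _ : Fin K => gaussianReal 0 (4 * R ^ 2 * σ₁ ^ 2).toNNReal).map
          (fun z => (M : ℝ)⁻¹ • ((∑ i, projBall c R (p' i)) + z)))
        ≤ (τ₁ : EReal) := by
  have hαpos : (0:ℝ) < α := lt_trans one_pos hα
  set v : ℝ≥0 := (4 * R ^ 2 * σ₁ ^ 2).toNNReal with hvdef
  have hvpos : (0:ℝ) < 4 * R ^ 2 * σ₁ ^ 2 := by positivity
  have hv : v ≠ 0 := (Real.toNNReal_pos.mpr hvpos).ne'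
  have hvcoe : (v : ℝ) = 4 * R ^ 2 * σ₁ ^ 2 := Real.coe_toNNReal _ hvpos.le
  have hMne : (M:ℝ) ≠ 0 := Nat.cast_ne_zero.mpr hM.ne'
  set s : Fin K → ℝ := ∑ i, projBall c R (p i) with hs
  set s' : Fin K → ℝ := ∑ i, projBall c R (p' i) with hs'
  set w : ℝ≥0 := invSqNN M * v with hwdef
  have hw : w ≠ 0 := by
    refine mul_ne_zero ?_ hv
    rw [ne_eq, ← NNReal.coe_eq_zero, coe_invSqNN]
    exact pow_ne_zero 2 (inv_ne_zero hMne)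
  have hwcoe : (w : ℝ) = ((M:ℝ)⁻¹)^2 * (4 * R ^ 2 * σ₁ ^ 2) := by
    rw [hwdef, NNReal.coe_mul, hvcoe, coe_invSqNN]
  have hrw := renyiDiv_pi_gauss (fun k => (M:ℝ)⁻¹ * s k) (fun k => (M:ℝ)⁻¹ * s' k) hw hα
  -- difference of coordinates
  have hd : ∀ k, s k - s' k = projBall c R (p j) k - projBall c R (p' j) k := by
    intro k
    rw [hs, hs', Finset.sum_apply, Finset.sum_apply, ← Finset.sum_sub_distrib]
    exact Finset.sum_eq_single j
      (fun i _ hij => by rw [hagree i hij]; ring)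
      (fun h => absurd (Finset.mem_univ j) h)
  have hD : ∑ k, (s k - s' k)^2 ≤ 4 * R^2 := by
    have h1 := projBall_sub_sq_sum_le c hR (p j)
    have h2 := projBall_sub_sq_sum_le c hR (p' j)
    have h3 := Finset.sum_mul_sq_le_sq_mul_sq Finset.univ
      (fun k => projBall c R (p j) k - c k) (fun k => projBall c R (p' j) k - c k)
    have hexp : ∑ k, (s k - s' k)^2
        = (∑ k, (projBall c R (p j) k - c k)^2)
          - 2 * (∑ k, (projBall c R (p j) k - c k) * (projBall c R (p' j) k - c k))
          + ∑ k, (projBall c R (p' j) k - c k)^2 := by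
      rw [Finset.mul_sum, ← Finset.sum_sub_distrib, ← Finset.sum_add_distrib]
      refine Finset.sum_congr rfl fun k _ => ?_
      rw [hd k]; ring
    nlinarith [sq_nonneg ((∑ k, (projBall c R (p j) k - c k) * (projBall c R (p' j) k - c k)) + R^2),
      Finset.sum_nonneg (fun k (_ : k ∈ Finset.univ) => sq_nonneg (projBall c R (p j) k - c k)),
      Finset.sum_nonneg (fun k (_ : k ∈ Finset.univ) => sq_nonneg (projBall c R (p' j) k - c k)),
      sq_nonneg R, mul_pos (mul_pos (by norm_num : (0:ℝ) < 4) (pow_pos hR 2)) (pow_pos hσ₁ 2)]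
  -- the common bound
  have main : renyiDiv α
      ((Measure.pi fun _ : Fin K => gaussianReal 0 v).map (fun z => (M : ℝ)⁻¹ • (s + z)))
      ((Measure.pi fun _ : Fin K => gaussianReal 0 v).map (fun z => (M : ℝ)⁻¹ • (s' + z)))
      ≤ ((α / (2 * σ₁ ^ 2) : ℝ) : EReal) := by
    rw [map_affine_pi K M v s, map_affine_pi K M v s', hrw]
    rw [EReal.coe_le_coe_iff]
    have hsum : ∑ k, ((M:ℝ)⁻¹ * s k - (M:ℝ)⁻¹ * s' k)^2
        = ((M:ℝ)⁻¹)^2 * ∑ k, (s k - s' k)^2 := by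
      rw [Finset.mul_sum]
      exact Finset.sum_congr rfl fun k _ => by ring
    rw [hsum, hwcoe]
    set D := ∑ k, (s k - s' k)^2 with hDdef
    have hDnn : 0 ≤ D := Finset.sum_nonneg fun k _ => sq_nonneg _
    have hkey : α * (((M:ℝ)⁻¹)^2 * D) / (2 * (((M:ℝ)⁻¹)^2 * (4 * R ^ 2 * σ₁ ^ 2)))
        = α * D / (8 * R^2 * σ₁^2) := by
      have him : ((M:ℝ)⁻¹)^2 ≠ 0 := pow_ne_zero _ (inv_ne_zero hMne)
      rw [show (2:ℝ) * (((M:ℝ)⁻¹)^2 * (4 * R^2 * σ₁^2)) = ((M:ℝ)⁻¹)^2 * (8 * R^2 * σ₁^2) by ring,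
        show α * (((M:ℝ)⁻¹)^2 * D) = ((M:ℝ)⁻¹)^2 * (α * D) by ring,
        mul_div_mul_left _ _ him]
    rw [hkey, div_le_div_iff₀ (by positivity) (by positivity)]
    nlinarith [mul_le_mul_of_nonneg_left hD hαpos.le, pow_pos hσ₁ 2,
      mul_pos (pow_pos hR 2) (pow_pos hσ₁ 2)]
  refine ⟨main, fun τ₁ hτ₁ hσ => ?_⟩
  have hσsq : σ₁ ^ 2 = α / (2 * τ₁) := by
    rw [hσ, Real.sq_sqrt (by positivity)]
  have : (α / (2 * σ₁ ^ 2) : ℝ) = τ₁ := by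
    rw [hσsq]
    field_simp
  calc renyiDiv α _ _ ≤ ((α / (2 * σ₁ ^ 2) : ℝ) : EReal) := main
    _ = (τ₁ : EReal) := by rw [this]
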